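/- Let F be a finite field, C ⊆ F[D]^N an (N,k) convolutional code with generator matrix G(D) ∈ F[D]^{k×N}, and B ∈ F^{N×n} a constant matrix of rank N (so N ≤ n). Then G(D)B ∈ F[D]^{k×n} is a generator matrix of the (n,k) convolutional code CB = {v(D)B : v(D) ∈ C} ⊆ F[D]^n; moreover, if G(D) is a reduced generator matrix of C then G(D)B is a reduced generator matrix of CB, and if G(D) is basic then G(D)B is basic. Consequently, if C is non-catastrophic then so is CB, and δ(CB) = δ(C) and μ(CB) = μ(C). -/

import Mathlib

open Polynomial Matrix Finset

noncomputable section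

namespace LRCC

variable {F : Type*} [Field F] {ι : Type*} [Fintype ι] {k : ℕ}

/-- Hamming weight of a vector: number of nonzero entries. -/
def hWt {α β : Type*} [Zero β] (v : α → β) : ℕ :=
  Nat.card {a // v a ≠ 0}

/-- `G` is a generator matrix of the convolutional code `C ⊆ F[D]^ι`:
its rows are `F[D]`-linearly independent (full rank) and they span `C`. -/
def IsGenMat (C : Submodule (Polynomial F) (ι → Polynomial F))
    (G : Matrix (Fin k) ι (Polynomial F)) : Prop :=
  LinearIndependent (Polynomial F) (fun i => G i) ∧
    C = Submodule.span (Polynomial F) (Set.range fun i => G i)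

/-- Degree of the `i`-th row of `G` (the maximum of the degrees of its entries). -/
def rowDeg (G : Matrix (Fin k) ι (Polynomial F)) (i : Fin k) : ℕ :=
  Finset.univ.sup fun j => (G i j).natDegree

/-- `G` is a reduced generator matrix of `C`: the sum of its row degrees is
minimum among all generator matrices of `C`. -/
def IsRedGenMat (C : Submodule (Polynomial F) (ι → Polynomial F))
    (G : Matrix (Fin k) ι (Polynomial F)) : Prop :=
  IsGenMat C G ∧ ∀ G' : Matrix (Fin k) ι (Polynomial F), IsGenMat C G' →
    ∑ i, rowDeg G i ≤ ∑ i, rowDeg G' i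

/-- `G` is a basic generator matrix of `C`: it has a polynomial right inverse. -/
def IsBasicGenMat (C : Submodule (Polynomial F) (ι → Polynomial F))
    (G : Matrix (Fin k) ι (Polynomial F)) : Prop :=
  IsGenMat C G ∧ ∃ Fi : Matrix ι (Fin k) (Polynomial F), G * Fi = 1

/-- `C` is non-catastrophic: it admits a reduced and basic generator matrix. -/
def NonCatastrophic (C : Submodule (Polynomial F) (ι → Polynomial F)) (k : ℕ) : Prop :=
  ∃ G : Matrix (Fin k) ι (Polynomial F), IsRedGenMat C G ∧ IsBasicGenMat C G

/-- `C` is a convolutional code of rank `k` (a free submodule of rank `k`,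
equivalently it admits a `k`-row generator matrix). -/
def IsConvCode (C : Submodule (Polynomial F) (ι → Polynomial F)) (k : ℕ) : Prop :=
  ∃ G : Matrix (Fin k) ι (Polynomial F), IsGenMat C G

/-- `h`-th coefficient matrix `G_h` of a polynomial matrix `G(D) = Σ_h G_h D^h`. -/
def coeffMat (G : Matrix (Fin k) ι (Polynomial F)) (h : ℕ) : Matrix (Fin k) ι F :=
  fun i j => (G i j).coeff h

/-- `j`-th truncated sliding generator matrix `G_j^c`. -/
def slidingMat (G : Matrix (Fin k) ι (Polynomial F)) (j : ℕ) :
    Matrix (Fin (j + 1) × Fin k) (Fin (j + 1) × ι) F :=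
  fun a b => if (a.1 : ℕ) ≤ (b.1 : ℕ) then (G a.2 b.2).coeff ((b.1 : ℕ) - (a.1 : ℕ)) else 0

/-- `j`-th column block code `C_j^c`. -/
def colBlockCode (G : Matrix (Fin k) ι (Polynomial F)) (j : ℕ) :
    Set (Fin (j + 1) × ι → F) :=
  { v | ∃ u : Fin (j + 1) × Fin k → F, (fun i => u (0, i)) ≠ 0 ∧
      v = Matrix.vecMul u (slidingMat G j) }

/-- `j`-th column (Hamming) distance. -/
def colDist (G : Matrix (Fin k) ι (Polynomial F)) (j : ℕ) : ℕ :=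
  sInf (hWt '' colBlockCode G j)

/-- Restriction of a convolutional code to a subset `Δ` of its coordinates. -/
def restrictCode (C : Submodule (Polynomial F) (ι → Polynomial F)) (Δ : Finset ι) :
    Submodule (Polynomial F) ({x // x ∈ Δ} → Polynomial F) :=
  C.map (LinearMap.funLeft (Polynomial F) (Polynomial F) Subtype.val)

/-- Associated block code `C^0` of a convolutional code `C`
(the set of `j`-th coefficient vectors of codewords, for `j` large enough;
this union over all `j` equals `{v_μ : v(D) ∈ C}` for `μ` the memory of the code). -/
def assocBlockCode (C : Submodule (Polynomial F) (ι → Polynomial F)) : Set (ι → F) :=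
  { w | ∃ v ∈ C, ∃ j : ℕ, ∀ i, w i = (v i).coeff j }

/-- `C` is an `(n, k, r, ∂)` locally repairable convolutional code with local
groups `Γ 1, ..., Γ g` covering all coordinates. -/
def IsLRCC (C : Submodule (Polynomial F) (ι → Polynomial F)) (k r d : ℕ)
    {g : ℕ} (Γ : Fin g → Finset ι) : Prop :=
  IsConvCode C k ∧
  (∀ x : ι, ∃ a, x ∈ Γ a) ∧
  (∀ a, (Γ a).card ≤ r + d - 1) ∧
  (∀ a, ∀ w ∈ assocBlockCode (restrictCode C (Γ a)), w ≠ 0 → d ≤ hWt w)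

/-- `C` is `j`-MDS: non-catastrophic with `j`-th column distance `(n−k)(j+1)+1`. -/
def IsjMDS (C : Submodule (Polynomial F) (ι → Polynomial F)) (k j : ℕ) : Prop :=
  NonCatastrophic C k ∧
  ∀ G : Matrix (Fin k) ι (Polynomial F), IsRedGenMat C G →
    colDist G j = (Fintype.card ι - k) * (j + 1) + 1

/-- `C` is partial `j`-MDS with respect to local groups `Γ`. -/
def IsPartialjMDS [DecidableEq ι] (C : Submodule (Polynomial F) (ι → Polynomial F))
    (k r d : ℕ) {g : ℕ} (Γ : Fin g → Finset ι) (j : ℕ) : Prop :=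
  ∀ Δ : Fin g → Finset ι, (∀ a, Δ a ⊆ Γ a) → (∀ a, (Γ a \ Δ a).card = d - 1) →
    IsjMDS (restrictCode C (Finset.univ.biUnion Δ)) k j

section SumRank

variable (Fq : Type*) [Field Fq] {Fqm : Type*} [Field Fqm] [Algebra Fq Fqm]

/-- Sum-rank weight of `c ∈ F_{q^m}^{gr}` (with respect to a basis `B` of
`F_{q^m}` over `F_q`): the sum over the `g` blocks of the ranks of the
matrix representations of the blocks. -/
def srWt {m g r : ℕ} (B : Module.Basis (Fin m) Fq Fqm) (c : Fin g × Fin r → Fqm) : ℕ :=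
  ∑ a : Fin g, (Matrix.of fun (i : Fin m) (j : Fin r) => B.repr (c (a, j)) i).rank

/-- Sum-rank weight of a window vector in `F_{q^m}^{(j+1)gr}`. -/
def srWtVec {m g r : ℕ} (B : Module.Basis (Fin m) Fq Fqm) {j : ℕ}
    (v : Fin (j + 1) × (Fin g × Fin r) → Fqm) : ℕ :=
  ∑ h : Fin (j + 1), srWt Fq B fun p => v (h, p)

/-- `j`-th sum-rank column distance. -/
def srColDist {m g r k : ℕ} (B : Module.Basis (Fin m) Fq Fqm)
    (G : Matrix (Fin k) (Fin g × Fin r) (Polynomial Fqm)) (j : ℕ) : ℕ :=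
  sInf (srWtVec Fq B '' colBlockCode G j)

/-- `C` is `j`-MSRD. -/
def IsjMSRD {m g r : ℕ} (B : Module.Basis (Fin m) Fq Fqm)
    (C : Submodule (Polynomial Fqm) (Fin g × Fin r → Polynomial Fqm)) (k j : ℕ) : Prop :=
  NonCatastrophic C k ∧
  ∀ G : Matrix (Fin k) (Fin g × Fin r) (Polynomial Fqm), IsRedGenMat C G →
    srColDist Fq B G j = (g * r - k) * (j + 1) + 1

/-- The block-diagonal matrix `diag_g(A)`, with `g` diagonal copies of `A`,
viewed over the polynomial ring `F_{q^m}[D]`. -/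
def diagMap (g : ℕ) {r s : ℕ} (A : Matrix (Fin r) (Fin s) Fq) :
    Matrix (Fin g × Fin r) (Fin g × Fin s) (Polynomial Fqm) :=
  fun p q => if p.1 = q.1 then Polynomial.C (algebraMap Fq Fqm (A p.2 q.2)) else 0

/-- The global code of Construction 1: `C_glob = { v(D) diag_g(A) : v(D) ∈ C_out }`. -/
def globCode {g r s : ℕ}
    (Cout : Submodule (Polynomial Fqm) (Fin g × Fin r → Polynomial Fqm))
    (A : Matrix (Fin r) (Fin s) Fq) :
    Submodule (Polynomial Fqm) (Fin g × Fin s → Polynomial Fqm) :=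
  Cout.map (Matrix.vecMulLinear (diagMap (Fqm := Fqm) Fq g A))

end SumRank

section Aux18

variable {κ : Type*} [Fintype κ]

/-- Degree of a polynomial vector. -/
def vecDeg (v : ι → Polynomial F) : ℕ := Finset.univ.sup fun j => (v j).natDegree

lemma rowDeg_eq_vecDeg (G : Matrix (Fin k) ι (Polynomial F)) (i : Fin k) :
    rowDeg G i = vecDeg (G i) := rfl

lemma vecDeg_vecMul_C_le (v : ι → Polynomial F) (M : Matrix ι κ F) :
    vecDeg (v ᵥ* (M.map Polynomial.C)) ≤ vecDeg v := by
  apply Finset.sup_le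
  intro j _
  show ((v ᵥ* M.map Polynomial.C) j).natDegree ≤ _
  rw [Matrix.vecMul, dotProduct]
  apply Polynomial.natDegree_sum_le_of_forall_le
  intro i _
  calc (v i * (M.map Polynomial.C) i j).natDegree
      ≤ (v i).natDegree + ((M.map Polynomial.C) i j).natDegree := Polynomial.natDegree_mul_le
    _ ≤ (v i).natDegree + 0 := by
        simp [Matrix.map_apply]
    _ ≤ vecDeg v := by
        simpa [vecDeg] using Finset.le_sup (f := fun i => (v i).natDegree) (Finset.mem_univ i)

lemma exists_right_inv {N n : ℕ} (B : Matrix (Fin N) (Fin n) F) (hB : B.rank = N) :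
    ∃ B' : Matrix (Fin n) (Fin N) F, B * B' = 1 := by
  have hsurj : LinearMap.range B.mulVecLin = ⊤ := by
    apply Submodule.eq_top_of_finrank_eq
    rw [show Module.finrank F (LinearMap.range B.mulVecLin) = B.rank from rfl, hB]
    simp [Module.finrank_pi]
  obtain ⟨g, hg⟩ := LinearMap.exists_rightInverse_of_surjective B.mulVecLin hsurj
  refine ⟨LinearMap.toMatrix' g, ?_⟩
  apply Matrix.toLin'.injective
  rw [show Matrix.toLin' (B * LinearMap.toMatrix' g) = (B * LinearMap.toMatrix' g).mulVecLin from rfl]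
  rw [Matrix.mulVecLin_mul]
  rw [show (LinearMap.toMatrix' g).mulVecLin = Matrix.toLin' (LinearMap.toMatrix' g) from rfl]
  rw [Matrix.toLin'_toMatrix']
  rw [show B.mulVecLin ∘ₗ g = LinearMap.id from hg]
  simp [Matrix.toLin'_one]

/-- The rows of leading coefficients of a reduced generator matrix are
`F`-linearly independent. -/
lemma lead_linearIndependent {C : Submodule (Polynomial F) (ι → Polynomial F)}
    {G : Matrix (Fin k) ι (Polynomial F)} (hG : IsRedGenMat C G) :
    LinearIndependent F (fun i (j : ι) => (G i j).coeff (rowDeg G i)) := by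
  classical
  by_contra hnot
  obtain ⟨g, hsum, i₁, hi₁⟩ := Fintype.not_linearIndependent_iff.mp hnot
  set e : Fin k → ℕ := rowDeg G with he
  have hs : (Finset.univ.filter fun i => g i ≠ 0).Nonempty := ⟨i₁, by simp [hi₁]⟩
  obtain ⟨i₀, hi₀mem, hi₀⟩ := Finset.exists_mem_eq_sup _ hs e
  have hgi₀ : g i₀ ≠ 0 := (Finset.mem_filter.mp hi₀mem).2
  have hmax : ∀ l, g l ≠ 0 → e l ≤ e i₀ :=
    fun l hl => hi₀ ▸ Finset.le_sup (Finset.mem_filter.mpr ⟨Finset.mem_univ l, hl⟩)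
  set c : Fin k → Polynomial F :=
    fun l => Polynomial.C (g l) * Polynomial.X ^ (e i₀ - e l) with hc
  set r : ι → Polynomial F := ∑ l, c l • G l with hr
  have hci₀ : c i₀ = Polynomial.C (g i₀) := by simp [hc]
  set G'' : Matrix (Fin k) ι (Polynomial F) := G.updateRow i₀ r with hG''def
  have hrow_ne : ∀ i, i ≠ i₀ → G'' i = G i := fun i hi => Matrix.updateRow_ne hi
  have hrow_eq : G'' i₀ = r := Matrix.updateRow_self
  -- linear independence of the rows of G''
  have hind := hG.1.1
  have hind'' : LinearIndependent (Polynomial F) (fun i => G'' i) := by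
    rw [Fintype.linearIndependent_iff]
    intro a ha
    have expand : ∑ i, a i • G'' i
        = ∑ l, ((a i₀ * c l) + (if l = i₀ then 0 else a l)) • G l := by
      rw [← Finset.add_sum_erase _ (fun i => a i • G'' i) (Finset.mem_univ i₀)]
      have h1 : a i₀ • G'' i₀ = ∑ l, (a i₀ * c l) • G l := by
        rw [hrow_eq, hr, Finset.smul_sum]
        exact Finset.sum_congr rfl fun l _ => smul_smul _ _ _
      have h2 : ∑ i ∈ Finset.univ.erase i₀, a i • G'' i
          = ∑ l, (if l = i₀ then 0 else a l) • G l := by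
        rw [← Finset.sum_erase (f := fun l => (if l = i₀ then 0 else a l) • G l)
            Finset.univ (show (if i₀ = i₀ then (0 : Polynomial F) else a i₀) • G i₀ = 0 by simp)]
        exact Finset.sum_congr rfl fun i hi => by
          rw [hrow_ne i (Finset.mem_erase.mp hi).1, if_neg (Finset.mem_erase.mp hi).1]
      rw [h1, h2, ← Finset.sum_add_distrib]
      exact Finset.sum_congr rfl fun l _ => (add_smul _ _ _).symm
    rw [expand] at ha
    have hall := Fintype.linearIndependent_iff.mp hind _ ha
    have hai₀ : a i₀ = 0 := by
      have := hall i₀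
      rw [if_pos rfl, add_zero, hci₀] at this
      rcases mul_eq_zero.mp this with h | h
      · exact h
      · exact absurd h (by simp [hgi₀])
    intro i
    by_cases hii : i = i₀
    · rw [hii]; exact hai₀
    · have := hall i
      rw [if_neg hii, hai₀, zero_mul, zero_add] at this
      exact this
  -- span equality
  have hspan : C = Submodule.span (Polynomial F) (Set.range fun i => G'' i) := by
    rw [hG.1.2]
    apply le_antisymm
    · rw [Submodule.span_le]
      rintro _ ⟨i, rfl⟩
      show G i ∈ _
      by_cases hii : i = i₀
      · subst hii
        have key : Polynomial.C (g i) • G i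
            = r - ∑ l ∈ Finset.univ.erase i, c l • G l := by
          rw [hr, ← Finset.add_sum_erase _ (fun l => c l • G l) (Finset.mem_univ i), hci₀]
          abel
        have key2 : G i = Polynomial.C (g i)⁻¹ • (r - ∑ l ∈ Finset.univ.erase i, c l • G l) := by
          rw [← key, smul_smul, ← Polynomial.C_mul, inv_mul_cancel₀ hgi₀, Polynomial.C_1,
            one_smul]
        rw [key2]
        apply Submodule.smul_mem
        apply Submodule.sub_mem
        · rw [← hrow_eq]
          exact Submodule.subset_span ⟨i, rfl⟩
        · apply Submodule.sum_mem
          intro l hl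
          apply Submodule.smul_mem
          rw [← hrow_ne l (Finset.mem_erase.mp hl).1]
          exact Submodule.subset_span ⟨l, rfl⟩
      · rw [← hrow_ne i hii]
        exact Submodule.subset_span ⟨i, rfl⟩
    · rw [Submodule.span_le]
      rintro _ ⟨i, rfl⟩
      show G'' i ∈ _
      by_cases hii : i = i₀
      · subst hii
        rw [hrow_eq, hr]
        apply Submodule.sum_mem
        intro l _
        exact Submodule.smul_mem _ _ (Submodule.subset_span ⟨l, rfl⟩)
      · rw [hrow_ne i hii]
        exact Submodule.subset_span ⟨i, rfl⟩
  have hgen'' : IsGenMat C G'' := ⟨hind'', hspan⟩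
  -- degree properties of r
  have hrj : ∀ j, r j = ∑ l, c l * G l j := by
    intro j
    rw [hr, Finset.sum_apply]
    rfl
  have hcoeff : ∀ j, (r j).coeff (e i₀) = 0 := by
    intro j
    rw [hrj, Polynomial.finset_sum_coeff]
    have hterm : ∀ l, (c l * G l j).coeff (e i₀) = g l * (G l j).coeff (e l) := by
      intro l
      by_cases hgl : g l = 0
      · simp [hc, hgl]
      · rw [hc]
        rw [show Polynomial.C (g l) * Polynomial.X ^ (e i₀ - e l) * G l j
            = Polynomial.C (g l) * (G l j * Polynomial.X ^ (e i₀ - e l)) by ring]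
        rw [Polynomial.coeff_C_mul, Polynomial.coeff_mul_X_pow', if_pos (Nat.sub_le _ _),
          Nat.sub_sub_self (hmax l hgl)]
    rw [Finset.sum_congr rfl fun l _ => hterm l]
    have := congrFun hsum j
    simpa [Finset.sum_apply] using this
  have hdegr : ∀ j, (r j).natDegree ≤ e i₀ := by
    intro j
    rw [hrj]
    apply Polynomial.natDegree_sum_le_of_forall_le
    intro l _
    by_cases hgl : g l = 0
    · simp [hc, hgl]
    · calc (c l * G l j).natDegree ≤ (c l).natDegree + (G l j).natDegree :=
          Polynomial.natDegree_mul_le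
        _ ≤ (e i₀ - e l) + e l := by
            apply add_le_add
            · rw [hc]
              exact Polynomial.natDegree_mul_le.trans (by simp)
            · exact Finset.le_sup (f := fun j => (G l j).natDegree) (Finset.mem_univ j)
        _ = e i₀ := Nat.sub_add_cancel (hmax l hgl)
  by_cases he₀ : e i₀ = 0
  · have hr0 : r = 0 := by
      funext j
      have h1 := hdegr j; have h2 := hcoeff j
      rw [he₀] at h1 h2
      rw [Polynomial.eq_C_of_natDegree_le_zero h1, h2, Polynomial.C_0]
      rfl
    exact hind''.ne_zero i₀ (by rw [hrow_eq, hr0]) 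
  · have hlt : rowDeg G'' i₀ < e i₀ := by
      rw [rowDeg_eq_vecDeg, hrow_eq]
      rw [vecDeg]
      rw [Finset.sup_lt_iff (Nat.pos_of_ne_zero he₀)]
      intro j _
      rcases lt_or_eq_of_le (hdegr j) with h | h
      · exact h
      · exfalso
        have hrj0 : r j ≠ 0 := by
          intro h0
          rw [h0, Polynomial.natDegree_zero] at h
          exact he₀ h.symm
        have := Polynomial.leadingCoeff_ne_zero.mpr hrj0
        rw [Polynomial.leadingCoeff, h] at this
        exact this (hcoeff j)
    have hsum_lt : ∑ i, rowDeg G'' i < ∑ i, rowDeg G i := by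
      apply Finset.sum_lt_sum
      · intro i _
        by_cases hii : i = i₀
        · subst hii; exact le_of_lt hlt
        · rw [rowDeg_eq_vecDeg, hrow_ne i hii, ← rowDeg_eq_vecDeg]
      · exact ⟨i₀, Finset.mem_univ _, hlt⟩
    exact absurd (hG.2 G'' hgen'') (not_le.mpr hsum_lt)

lemma coeff_mul_eq_ite {p q : Polynomial F} {e m : ℕ} (hq : q.natDegree ≤ e)
    (hpe : p.natDegree + e ≤ m) :
    (p * q).coeff m = if p.natDegree + e = m then p.leadingCoeff * q.coeff e else 0 := by
  rcases eq_or_ne (p.natDegree + e) m with h | h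
  · rw [if_pos h, Polynomial.coeff_mul]
    rw [Finset.sum_eq_single_of_mem (p.natDegree, e) (Finset.HasAntidiagonal.mem_antidiagonal.mpr h)]
    · rfl
    · rintro ⟨a, b⟩ hab hne
      have hab' : a + b = m := Finset.HasAntidiagonal.mem_antidiagonal.mp hab
      rcases lt_trichotomy a p.natDegree with hlt | heq | hgt
      · have hb : e < b := by omega
        rw [Polynomial.coeff_eq_zero_of_natDegree_lt (lt_of_le_of_lt hq hb), mul_zero]
      · exfalso
        apply hne
        have hb : b = e := by omega
        simp [heq, hb]
      · rw [Polynomial.coeff_eq_zero_of_natDegree_lt hgt, zero_mul]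
  · rw [if_neg h]
    apply Polynomial.coeff_eq_zero_of_natDegree_lt
    calc (p * q).natDegree ≤ p.natDegree + q.natDegree := Polynomial.natDegree_mul_le
      _ ≤ p.natDegree + e := by omega
      _ < m := lt_of_le_of_ne hpe h

/-- Predictable degree property. -/
lemma pd_lemma {G : Matrix (Fin k) ι (Polynomial F)}
    (hL : LinearIndependent F (fun i (j : ι) => (G i j).coeff (rowDeg G i)))
    (u : Fin k → Polynomial F) {i₀ : Fin k} (hu : u i₀ ≠ 0) :
    (u i₀).natDegree + rowDeg G i₀ ≤ vecDeg (fun j => ∑ i, u i * G i j) := by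
  classical
  set e : Fin k → ℕ := rowDeg G with he
  set s := Finset.univ.filter (fun i => u i ≠ 0) with hs
  have hs' : s.Nonempty := ⟨i₀, Finset.mem_filter.mpr ⟨Finset.mem_univ _, hu⟩⟩
  set m := s.sup (fun i => (u i).natDegree + e i) with hm
  have h1 : (u i₀).natDegree + e i₀ ≤ m := by
    rw [hm]
    exact Finset.le_sup (f := fun i => (u i).natDegree + e i)
      (Finset.mem_filter.mpr ⟨Finset.mem_univ i₀, hu⟩)
  refine h1.trans ?_
  obtain ⟨i₁, hi₁mem, hi₁⟩ := Finset.exists_mem_eq_sup s hs' (fun i => (u i).natDegree + e i)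
  have hu₁ : u i₁ ≠ 0 := (Finset.mem_filter.mp hi₁mem).2
  set d : Fin k → F := fun i =>
    if (u i).natDegree + e i = m ∧ u i ≠ 0 then (u i).leadingCoeff else 0 with hd
  have hd₁ : d i₁ ≠ 0 := by
    have hcond : (u i₁).natDegree + e i₁ = m ∧ u i₁ ≠ 0 := ⟨hi₁.symm, hu₁⟩
    show (if (u i₁).natDegree + e i₁ = m ∧ u i₁ ≠ 0 then (u i₁).leadingCoeff else 0) ≠ 0
    rw [if_pos hcond]
    exact Polynomial.leadingCoeff_ne_zero.mpr hu₁
  obtain ⟨j, hj⟩ : ∃ j, ∑ i, d i * (G i j).coeff (e i) ≠ 0 := by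
    by_contra hcon
    push_neg at hcon
    have h0 : ∑ i, d i • (fun (j : ι) => (G i j).coeff (rowDeg G i)) = 0 := by
      funext j
      rw [Finset.sum_apply]
      simpa [smul_eq_mul, ← he] using hcon j
    exact hd₁ (Fintype.linearIndependent_iff.mp hL d h0 i₁)
  have hcoeff : (∑ i, u i * G i j).coeff m = ∑ i, d i * (G i j).coeff (e i) := by
    rw [Polynomial.finset_sum_coeff]
    apply Finset.sum_congr rfl
    intro i _
    by_cases hui : u i = 0
    · simp [hui, hd]
    · have hle : (u i).natDegree + e i ≤ m := by
        rw [hm]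
        exact Finset.le_sup (f := fun i => (u i).natDegree + e i)
          (Finset.mem_filter.mpr ⟨Finset.mem_univ i, hui⟩)
      rw [coeff_mul_eq_ite (show (G i j).natDegree ≤ e i from
        Finset.le_sup (f := fun j => (G i j).natDegree) (Finset.mem_univ j)) hle]
      by_cases hcond : (u i).natDegree + e i = m
      · simp [hd, hcond, hui]
      · simp [hd, hcond]
  have hm_le : m ≤ (∑ i, u i * G i j).natDegree :=
    Polynomial.le_natDegree_of_ne_zero (by rw [hcoeff]; exact hj)
  exact hm_le.trans (Finset.le_sup (f := fun j => (∑ i, u i * G i j).natDegree)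
    (Finset.mem_univ j))

lemma sup_rowDeg_le {C : Submodule (Polynomial F) (ι → Polynomial F)}
    {G G' : Matrix (Fin k) ι (Polynomial F)}
    (hG : IsRedGenMat C G) (hG' : IsRedGenMat C G') :
    Finset.univ.sup (rowDeg G') ≤ Finset.univ.sup (rowDeg G) := by
  apply Finset.sup_le
  intro i₀ _
  by_contra hcon
  push_neg at hcon
  have hL' := lead_linearIndependent hG'
  have hVex : ∀ j, ∃ V : Fin k → Polynomial F, ∑ i, V i • G' i = G j := by
    intro j
    have hmem : G j ∈ C := hG.1.2 ▸ Submodule.subset_span ⟨j, rfl⟩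
    rw [hG'.1.2] at hmem
    exact (Submodule.mem_span_range_iff_exists_fun _).mp hmem
  choose V hV using hVex
  have hV0 : ∀ j, V j i₀ = 0 := by
    intro j
    by_contra hne
    have hpd := pd_lemma hL' (V j) hne
    have heq : (fun x => ∑ i, V j i * G' i x) = G j := by
      funext x
      have := congrFun (hV j) x
      simpa [Finset.sum_apply, smul_eq_mul] using this
    rw [heq] at hpd
    have h2 : rowDeg G' i₀ ≤ rowDeg G j := le_trans (Nat.le_add_left _ _) hpd
    exact absurd (h2.trans (Finset.le_sup (Finset.mem_univ j))) (not_le.mpr hcon)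
  have hUex : ∀ i, ∃ U : Fin k → Polynomial F, ∑ j, U j • G j = G' i := by
    intro i
    have hmem : G' i ∈ C := hG'.1.2 ▸ Submodule.subset_span ⟨i, rfl⟩
    rw [hG.1.2] at hmem
    exact (Submodule.mem_span_range_iff_exists_fun _).mp hmem
  choose U hU using hUex
  have hrep : ∑ i, (∑ j, U i₀ j * V j i) • G' i = G' i₀ := by
    calc ∑ i, (∑ j, U i₀ j * V j i) • G' i
        = ∑ i, ∑ j, (U i₀ j * V j i) • G' i := by
          exact Finset.sum_congr rfl fun i _ => Finset.sum_smul
      _ = ∑ j, ∑ i, (U i₀ j * V j i) • G' i := Finset.sum_comm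
      _ = ∑ j, U i₀ j • ∑ i, V j i • G' i := by
          apply Finset.sum_congr rfl
          intro j _
          rw [Finset.smul_sum]
          exact Finset.sum_congr rfl fun i _ => (smul_smul _ _ _).symm
      _ = ∑ j, U i₀ j • G j := by
          exact Finset.sum_congr rfl fun j _ => by rw [hV j]
      _ = G' i₀ := hU i₀
  have hδ : ∑ i, (if i = i₀ then (1 : Polynomial F) else 0) • G' i = G' i₀ := by
    rw [Finset.sum_eq_single_of_mem i₀ (Finset.mem_univ i₀)]
    · rw [if_pos rfl, one_smul]
    · intro b _ hb
      rw [if_neg hb, zero_smul]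
  have key : ∑ i, ((∑ j, U i₀ j * V j i) - (if i = i₀ then 1 else 0)) • G' i = 0 := by
    have : ∑ i, ((∑ j, U i₀ j * V j i) - (if i = i₀ then 1 else 0)) • G' i
        = ∑ i, ((∑ j, U i₀ j * V j i) • G' i)
          - ∑ i, (if i = i₀ then (1 : Polynomial F) else 0) • G' i := by
      rw [← Finset.sum_sub_distrib]
      exact Finset.sum_congr rfl fun i _ => sub_smul _ _ _
    rw [this, hrep, hδ, sub_self]
  have := Fintype.linearIndependent_iff.mp hG'.1.1 _ key i₀
  rw [if_pos rfl] at this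
  have hzero : (∑ j, U i₀ j * V j i₀) = 0 := by
    apply Finset.sum_eq_zero
    intro j _
    rw [hV0 j, mul_zero]
  rw [hzero, zero_sub, neg_eq_zero] at this
  exact one_ne_zero this

end Aux18

theorem statement18 {F : Type*} [Field F] [Fintype F] {N n k : ℕ}
    (C : Submodule (Polynomial F) (Fin N → Polynomial F))
    (G : Matrix (Fin k) (Fin N) (Polynomial F)) (hG : IsGenMat C G)
    (B : Matrix (Fin N) (Fin n) F) (hB : B.rank = N) :
    IsGenMat (C.map (Matrix.vecMulLinear (B.map Polynomial.C)))
      (G * B.map Polynomial.C) ∧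
    (IsRedGenMat C G →
      IsRedGenMat (C.map (Matrix.vecMulLinear (B.map Polynomial.C)))
        (G * B.map Polynomial.C)) ∧
    (IsBasicGenMat C G →
      IsBasicGenMat (C.map (Matrix.vecMulLinear (B.map Polynomial.C)))
        (G * B.map Polynomial.C)) ∧
    (NonCatastrophic C k →
      NonCatastrophic (C.map (Matrix.vecMulLinear (B.map Polynomial.C))) k) ∧
    (∀ (G₁ : Matrix (Fin k) (Fin N) (Polynomial F))
        (G₂ : Matrix (Fin k) (Fin n) (Polynomial F)),
      IsRedGenMat C G₁ →
      IsRedGenMat (C.map (Matrix.vecMulLinear (B.map Polynomial.C))) G₂ →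
        (∑ i, rowDeg G₁ i = ∑ i, rowDeg G₂ i) ∧
        Finset.univ.sup (rowDeg G₁) = Finset.univ.sup (rowDeg G₂)) := by
  obtain ⟨B', hBB'⟩ := exists_right_inv B hB
  set Pc : Matrix (Fin N) (Fin n) (Polynomial F) := B.map Polynomial.C with hPc
  set Qc : Matrix (Fin n) (Fin N) (Polynomial F) := B'.map Polynomial.C with hQc
  have hPQ : Pc * Qc = 1 := by
    rw [hPc, hQc, ← Matrix.map_mul, hBB']
    exact Matrix.map_one _ Polynomial.C_0 Polynomial.C_1
  set φ := Matrix.vecMulLinear Pc with hφ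
  set ψ := Matrix.vecMulLinear Qc with hψ
  have hψφ : ∀ v, ψ (φ v) = v := by
    intro v
    rw [hφ, hψ, Matrix.vecMulLinear_apply, Matrix.vecMulLinear_apply,
      Matrix.vecMul_vecMul, hPQ, Matrix.vecMul_one]
  have hinj : Function.Injective φ := Function.LeftInverse.injective hψφ
  have hdeg : ∀ v : Fin N → Polynomial F, vecDeg (φ v) = vecDeg v := by
    intro v
    apply le_antisymm
    · rw [hφ, Matrix.vecMulLinear_apply]
      exact vecDeg_vecMul_C_le v B
    · conv_lhs => rw [← hψφ v]
      rw [hψ, Matrix.vecMulLinear_apply]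
      exact vecDeg_vecMul_C_le (φ v) B'
  have hrowmul : ∀ (H : Matrix (Fin k) (Fin N) (Polynomial F)) (i : Fin k),
      (H * Pc) i = φ (H i) := by
    intro H i
    funext j
    rw [hφ, Matrix.vecMulLinear_apply]
    simp [Matrix.mul_apply, Matrix.vecMul, dotProduct]
  have hrowdeg : ∀ (H : Matrix (Fin k) (Fin N) (Polynomial F)) (i : Fin k),
      rowDeg (H * Pc) i = rowDeg H i := by
    intro H i
    rw [rowDeg_eq_vecDeg, rowDeg_eq_vecDeg, hrowmul, hdeg]
  -- forward transfer of generator matrices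
  have fwd : ∀ H : Matrix (Fin k) (Fin N) (Polynomial F), IsGenMat C H →
      IsGenMat (C.map φ) (H * Pc) := by
    intro H hH
    constructor
    · have : (fun i => (H * Pc) i) = (⇑φ ∘ fun i => H i) := by
        funext i
        exact hrowmul H i
      rw [this]
      exact hH.1.map' φ (LinearMap.ker_eq_bot.mpr hinj)
    · rw [hH.2, Submodule.map_span, ← Set.range_comp]
      have hfe : (⇑φ ∘ fun i => H i) = fun i => (H * Pc) i := by
        funext i
        exact (hrowmul H i).symm
      rw [hfe]
  -- pullback of generator matrices
  have pull : ∀ G' : Matrix (Fin k) (Fin n) (Polynomial F), IsGenMat (C.map φ) G' →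
      ∃ G'' : Matrix (Fin k) (Fin N) (Polynomial F), IsGenMat C G'' ∧
        ∀ i, φ (G'' i) = G' i := by
    intro G' hG'
    have hmem : ∀ i, ∃ w ∈ C, φ w = G' i := by
      intro i
      have : G' i ∈ C.map φ := hG'.2 ▸ Submodule.subset_span ⟨i, rfl⟩
      exact this
    choose w hwC hwφ using hmem
    refine ⟨Matrix.of w, ⟨?_, ?_⟩, fun i => hwφ i⟩
    · apply LinearIndependent.of_comp φ
      have : (⇑φ ∘ fun i => (Matrix.of w) i) = fun i => G' i := by
        funext i
        exact hwφ i
      rw [this]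
      exact hG'.1
    · apply le_antisymm
      · intro v hv
        have hv' : φ v ∈ C.map φ := Submodule.mem_map_of_mem hv
        rw [hG'.2] at hv'
        have : φ v ∈ Submodule.map φ
            (Submodule.span (Polynomial F) (Set.range fun i => (Matrix.of w) i)) := by
          rw [Submodule.map_span, ← Set.range_comp]
          have hr : (⇑φ ∘ fun i => (Matrix.of w) i) = fun i => G' i := by
            funext i
            exact hwφ i
          rw [hr]
          exact hv'
        obtain ⟨v', hv'span, hv'eq⟩ := this
        rw [← hinj hv'eq]
        exact hv'span
      · rw [Submodule.span_le]
        rintro _ ⟨i, rfl⟩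
        exact hwC i
  -- forward transfer of reducedness
  have fwdRed : ∀ H : Matrix (Fin k) (Fin N) (Polynomial F), IsRedGenMat C H →
      IsRedGenMat (C.map φ) (H * Pc) := by
    intro H hH
    refine ⟨fwd H hH.1, ?_⟩
    intro G' hG'
    obtain ⟨G'', hG''gen, hG''φ⟩ := pull G' hG'
    have hdeq : ∀ i, rowDeg G'' i = rowDeg G' i := by
      intro i
      rw [rowDeg_eq_vecDeg, rowDeg_eq_vecDeg, ← hG''φ i, hdeg]
    calc ∑ i, rowDeg (H * Pc) i = ∑ i, rowDeg H i :=
          Finset.sum_congr rfl fun i _ => hrowdeg H i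
      _ ≤ ∑ i, rowDeg G'' i := hH.2 G'' hG''gen
      _ = ∑ i, rowDeg G' i := Finset.sum_congr rfl fun i _ => hdeq i
  -- forward transfer of basicness
  have fwdBasic : ∀ H : Matrix (Fin k) (Fin N) (Polynomial F), IsBasicGenMat C H →
      IsBasicGenMat (C.map φ) (H * Pc) := by
    rintro H ⟨hHgen, Fi, hFi⟩
    refine ⟨fwd H hHgen, Qc * Fi, ?_⟩
    rw [Matrix.mul_assoc, ← Matrix.mul_assoc Pc Qc Fi, hPQ, Matrix.one_mul, hFi]
  refine ⟨fwd G hG, fwdRed G, fwdBasic G, ?_, ?_⟩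
  · rintro ⟨G₀, hred, hbasic⟩
    exact ⟨G₀ * Pc, fwdRed G₀ hred, fwdBasic G₀ hbasic⟩
  · intro G₁ G₂ h₁ h₂
    obtain ⟨G₂'', hgen₂, hφ₂⟩ := pull G₂ h₂.1
    have hrdeq : ∀ i, rowDeg G₂'' i = rowDeg G₂ i := by
      intro i
      rw [rowDeg_eq_vecDeg, rowDeg_eq_vecDeg, ← hφ₂ i, hdeg]
    have hsum : ∑ i, rowDeg G₁ i = ∑ i, rowDeg G₂ i := by
      apply le_antisymm
      · calc ∑ i, rowDeg G₁ i ≤ ∑ i, rowDeg G₂'' i := h₁.2 G₂'' hgen₂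
          _ = ∑ i, rowDeg G₂ i := Finset.sum_congr rfl fun i _ => hrdeq i
      · calc ∑ i, rowDeg G₂ i ≤ ∑ i, rowDeg (G₁ * Pc) i := h₂.2 (G₁ * Pc) (fwd G₁ h₁.1)
          _ = ∑ i, rowDeg G₁ i := Finset.sum_congr rfl fun i _ => hrowdeg G₁ i
    have hred₂'' : IsRedGenMat C G₂'' := by
      refine ⟨hgen₂, ?_⟩
      intro G3 hG3
      calc ∑ i, rowDeg G₂'' i = ∑ i, rowDeg G₂ i :=
            Finset.sum_congr rfl fun i _ => hrdeq i
        _ ≤ ∑ i, rowDeg (G3 * Pc) i := h₂.2 (G3 * Pc) (fwd G3 hG3)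
        _ = ∑ i, rowDeg G3 i := Finset.sum_congr rfl fun i _ => hrowdeg G3 i
    refine ⟨hsum, ?_⟩
    have h1 := sup_rowDeg_le h₁ hred₂''
    have h2 := sup_rowDeg_le hred₂'' h₁
    have h3 : Finset.univ.sup (rowDeg G₂'') = Finset.univ.sup (rowDeg G₂) :=
      Finset.sup_congr rfl fun i _ => hrdeq i
    omega

end LRCC
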